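/- Let U be a D×d matrix with orthonormal columns, let r ∈ R^D satisfy U^T r = 0, let w ∈ R^d be nonzero with r nonzero, and let σ, η ∈ R. Then the updated matrix U_new = U + ((cos(ση) - 1)/‖w‖²) U w w^T + sin(ση) (r/‖r‖)(w^T/‖w‖) also has orthonormal columns: U_new^T U_new = I_d. -/

import Mathlib

open Matrix

lemma mul_vecMulVec' {l m n : Type*} [Fintype m] (A : Matrix l m ℝ) (a : m → ℝ) (b : n → ℝ) :
    A * vecMulVec a b = vecMulVec (A *ᵥ a) b := by
  ext i j
  simp [mul_apply, vecMulVec_apply, mulVec, dotProduct, Finset.sum_mul, mul_assoc]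

lemma vecMulVec_mul' {l m n : Type*} [Fintype m] (a : l → ℝ) (b : m → ℝ) (A : Matrix m n ℝ) :
    vecMulVec a b * A = vecMulVec a (Aᵀ *ᵥ b) := by
  ext i j
  simp only [mul_apply, vecMulVec_apply, mulVec, dotProduct, transpose_apply, Finset.mul_sum]
  exact Finset.sum_congr rfl fun k _ => by ring

lemma vecMulVec_transpose' {m n : Type*} (a : m → ℝ) (b : n → ℝ) :
    (vecMulVec a b)ᵀ = vecMulVec b a := by
  ext i j; simp [vecMulVec_apply, mul_comm]

lemma vecMulVec_mul_vecMulVec' {l m n : Type*} [Fintype m] (a : l → ℝ) (b c : m → ℝ) (d : n → ℝ) :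
    vecMulVec a b * vecMulVec c d = (b ⬝ᵥ c) • vecMulVec a d := by
  rw [mul_vecMulVec']
  ext i j
  simp only [Matrix.smul_apply, vecMulVec_apply, mulVec, dotProduct, Finset.sum_mul, smul_eq_mul]
  exact Finset.sum_congr rfl fun k _ => by ring

lemma vecMulVec_zero' {m n : Type*} (a : m → ℝ) :
    vecMulVec a (0 : n → ℝ) = 0 := by ext i j; simp [vecMulVec_apply]

lemma zero_vecMulVec' {m n : Type*} (b : n → ℝ) :
    vecMulVec (0 : m → ℝ) b = 0 := by ext i j; simp [vecMulVec_apply]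

lemma vecMulVec_mulVec' {m n : Type*} [Fintype n] (a : m → ℝ) (b x : n → ℝ) :
    vecMulVec a b *ᵥ x = (b ⬝ᵥ x) • a := by
  ext i
  simp only [mulVec, vecMulVec_apply, dotProduct, Pi.smul_apply, smul_eq_mul, Finset.sum_mul]
  exact Finset.sum_congr rfl fun k _ => by ring

lemma smul_vecMulVec' {m n : Type*} (k : ℝ) (a : m → ℝ) (b : n → ℝ) :
    vecMulVec (k • a) b = k • vecMulVec a b := by
  ext i j; simp [vecMulVec_apply, mul_assoc]

theorem stmt_3 (D d : ℕ) (U : Matrix (Fin D) (Fin d) ℝ) (hU : Uᵀ * U = 1)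
    (r : Fin D → ℝ) (hr : Uᵀ *ᵥ r = 0) (hr0 : r ≠ 0)
    (w : Fin d → ℝ) (hw0 : w ≠ 0) (σ η : ℝ)
    (Unew : Matrix (Fin D) (Fin d) ℝ)
    (hUnew : Unew = U + ((Real.cos (σ * η) - 1) / (w ⬝ᵥ w)) • vecMulVec (U *ᵥ w) w
      + (Real.sin (σ * η) / (Real.sqrt (r ⬝ᵥ r) * Real.sqrt (w ⬝ᵥ w))) • vecMulVec r w) :
    Unewᵀ * Unew = 1 := by
  subst hUnew
  set c : ℝ := (Real.cos (σ * η) - 1) / (w ⬝ᵥ w) with hc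
  set s : ℝ := Real.sin (σ * η) / (Real.sqrt (r ⬝ᵥ r) * Real.sqrt (w ⬝ᵥ w)) with hs
  have hW : (0:ℝ) < w ⬝ᵥ w := by
    have hn : (0:ℝ) ≤ w ⬝ᵥ w := Finset.sum_nonneg fun i _ => mul_self_nonneg _
    rcases lt_or_eq_of_le hn with h | h
    · exact h
    · exact absurd ((dotProduct_self_eq_zero).mp h.symm) hw0
  have hR : (0:ℝ) < r ⬝ᵥ r := by
    have hn : (0:ℝ) ≤ r ⬝ᵥ r := Finset.sum_nonneg fun i _ => mul_self_nonneg _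
    rcases lt_or_eq_of_le hn with h | h
    · exact h
    · exact absurd ((dotProduct_self_eq_zero).mp h.symm) hr0
  have hUUw : Uᵀ *ᵥ (U *ᵥ w) = w := by
    rw [mulVec_mulVec, hU, one_mulVec]
  have hUwUw : (U *ᵥ w) ⬝ᵥ (U *ᵥ w) = w ⬝ᵥ w := by
    rw [dotProduct_mulVec, ← mulVec_transpose, hUUw]
  have hUwr : (U *ᵥ w) ⬝ᵥ r = 0 := by
    rw [dotProduct_comm, dotProduct_mulVec, ← mulVec_transpose, hr, zero_dotProduct]
  have hrUw : r ⬝ᵥ (U *ᵥ w) = 0 := by rw [dotProduct_comm]; exact hUwr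
  simp only [transpose_add, transpose_smul, vecMulVec_transpose', Matrix.add_mul, Matrix.mul_add,
    Matrix.smul_mul, Matrix.mul_smul, smul_smul, hU, mul_vecMulVec', vecMulVec_mul', vecMulVec_mulVec', smul_vecMulVec',
    vecMulVec_mul_vecMulVec', hUUw, hr, hUwUw, hUwr, hrUw, vecMulVec_zero', zero_vecMulVec',
    smul_zero, add_zero, zero_smul, zero_add]
  have key : c + (c + (c * c * (w ⬝ᵥ w) + s * s * (r ⬝ᵥ r))) = 0 := by
    rw [hc, hs]
    have h1 : Real.sqrt (r ⬝ᵥ r) * Real.sqrt (r ⬝ᵥ r) = r ⬝ᵥ r := Real.mul_self_sqrt hR.le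
    have h2 : Real.sqrt (w ⬝ᵥ w) * Real.sqrt (w ⬝ᵥ w) = w ⬝ᵥ w := Real.mul_self_sqrt hW.le
    have h3 : Real.sin (σ * η) ^ 2 + Real.cos (σ * η) ^ 2 = 1 := Real.sin_sq_add_cos_sq _
    have hss : Real.sin (σ * η) / (Real.sqrt (r ⬝ᵥ r) * Real.sqrt (w ⬝ᵥ w)) *
        (Real.sin (σ * η) / (Real.sqrt (r ⬝ᵥ r) * Real.sqrt (w ⬝ᵥ w)))
        = Real.sin (σ * η) * Real.sin (σ * η) / ((r ⬝ᵥ r) * (w ⬝ᵥ w)) := by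
      rw [div_mul_div_comm, mul_mul_mul_comm, h1, h2]
    rw [hss]
    field_simp
    linear_combination h3
  clear_value c s
  match_scalars
  all_goals first | linear_combination key | linear_combination -key | ring
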